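/- Suppose a U(1)-covariant channel maps state ρ on H to a state of the form p σ ⊗ |succ⟩⟨succ| + (1−p) (I/d) ⊗ |fail⟩⟨fail| on H' ⊗ C², where the flag states and I/d are U(1)-invariant. Then for every k ≠ 0, p ‖σ^(k)‖₁ ≤ ‖ρ^(k)‖₁. -/

import Mathlib

open Complex Matrix MeasureTheory
open scoped ComplexOrder

/-- The unitary representation of U(1) on a finite-dimensional Hilbert space with
orthonormal basis indexed by `ι`, where basis vector `i` carries integer charge `c i`:
`U(θ) = Σ_n e^{inθ} Π_n`. -/
noncomputable def Urep {ι : Type*} [Fintype ι] [DecidableEq ι] (c : ι → ℤ) (θ : ℝ) :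
    Matrix ι ι ℂ :=
  Matrix.diagonal fun i => Complex.exp (Complex.I * (c i : ℂ) * (θ : ℂ))

/-- The mode-`k` component of an operator: `A^(k) = Σ_n Π_{n+k} A Π_n`. -/
def modeComp {ι : Type*} [Fintype ι] [DecidableEq ι] (c : ι → ℤ) (k : ℤ)
    (A : Matrix ι ι ℂ) : Matrix ι ι ℂ :=
  Matrix.of fun i j => if c i - c j = k then A i j else 0

/-- The trace norm `‖A‖₁ = tr √(A†A)`. -/
noncomputable def traceNorm {ι : Type*} [Fintype ι] [DecidableEq ι]
    (A : Matrix ι ι ℂ) : ℝ :=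
  (((Matrix.posSemidef_conjTranspose_mul_self A).1.eigenvectorUnitary.1 *
      Matrix.diagonal (((↑) : ℝ → ℂ) ∘ (√·) ∘ (Matrix.posSemidef_conjTranspose_mul_self A).1.eigenvalues) *
      (star (Matrix.posSemidef_conjTranspose_mul_self A).1.eigenvectorUnitary : Matrix ι ι ℂ)).trace).re

/-- The Choi matrix of a linear superoperator. -/
noncomputable def choi {ι κ : Type*} [Fintype ι] [DecidableEq ι] [Fintype κ]
    (E : Matrix ι ι ℂ →ₗ[ℂ] Matrix κ κ ℂ) : Matrix (ι × κ) (ι × κ) ℂ :=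
  Matrix.of fun p q => E (Matrix.single p.1 q.1 1) p.2 q.2

/-- A quantum channel: completely positive (positive semidefinite Choi matrix)
and trace preserving. -/
def IsCPTP {ι κ : Type*} [Fintype ι] [DecidableEq ι] [Fintype κ]
    (E : Matrix ι ι ℂ →ₗ[ℂ] Matrix κ κ ℂ) : Prop :=
  (choi E).PosSemidef ∧ ∀ A : Matrix ι ι ℂ, (E A).trace = A.trace

/-- U(1)-covariance of a superoperator with respect to input charges `c`
and output charges `d`. -/
def IsCovariant {ι κ : Type*} [Fintype ι] [DecidableEq ι] [Fintype κ] [DecidableEq κ]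
    (c : ι → ℤ) (d : κ → ℤ) (E : Matrix ι ι ℂ →ₗ[ℂ] Matrix κ κ ℂ) : Prop :=
  ∀ (θ : ℝ) (X : Matrix ι ι ℂ),
    E (Urep c θ * X * (Urep c θ)ᴴ) = Urep d θ * E X * (Urep d θ)ᴴ

/-- A density operator (quantum state). -/
def IsDensity {ι : Type*} [Fintype ι] (ρ : Matrix ι ι ℂ) : Prop :=
  ρ.PosSemidef ∧ ρ.trace = 1
section AuxSqrt
open scoped MatrixOrder
variable {n : Type*} [Fintype n] [DecidableEq n]

noncomputable def Matrix.PosSemidef.sqrt {A : Matrix n n ℂ} (_ : A.PosSemidef) : Matrix n n ℂ :=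
  CFC.sqrt A

lemma Matrix.PosSemidef.posSemidef_sqrt {A : Matrix n n ℂ} (hA : A.PosSemidef) :
    hA.sqrt.PosSemidef :=
  Matrix.nonneg_iff_posSemidef.mp (CFC.sqrt_nonneg A)

lemma Matrix.PosSemidef.sqrt_mul_self {A : Matrix n n ℂ} (hA : A.PosSemidef) :
    hA.sqrt * hA.sqrt = A :=
  CFC.sqrt_mul_sqrt_self A hA.nonneg

lemma Matrix.PosSemidef.eq_sqrt_of_sq_eq {A : Matrix n n ℂ} (hA : A.PosSemidef) {B : Matrix n n ℂ}
    (hB : B.PosSemidef) (hAB : A ^ 2 = B) : A = hB.sqrt :=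
  ((CFC.sqrt_eq_iff B A hB.nonneg hA.nonneg).mpr (by rw [← hAB, pow_two])).symm

lemma Aux.traceNorm_eq (A : Matrix n n ℂ) :
    traceNorm A = ((Matrix.posSemidef_conjTranspose_mul_self A).sqrt.trace).re := by
  have hA := Matrix.posSemidef_conjTranspose_mul_self A
  unfold traceNorm Matrix.PosSemidef.sqrt
  rw [CFC.sqrt_eq_cfc, cfc_nnreal_eq_real _ (Aᴴ * A), hA.1.cfc_eq]
  simp only [Matrix.IsHermitian.cfc, Unitary.conjStarAlgAut_apply, Real.coe_sqrt, Real.coe_toNNReal']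
  congr 6
  funext i
  simp [max_eq_left (hA.eigenvalues_nonneg i)]

end AuxSqrt
section AuxA
open Kronecker
variable {n : Type*} [Fintype n] [DecidableEq n] {m : Type*} [Fintype m] [DecidableEq m]

lemma Aux.diag_nonneg {M : Matrix n n ℂ} (hM : M.PosSemidef) (i : n) : 0 ≤ M i i := by
  exact hM.diag_nonneg

lemma Aux.trace_nonneg {M : Matrix n n ℂ} (hM : M.PosSemidef) : 0 ≤ M.trace := by
  exact Finset.sum_nonneg fun i _ => Aux.diag_nonneg hM i

lemma Aux.trace_re_nonneg {M : Matrix n n ℂ} (hM : M.PosSemidef) : 0 ≤ M.trace.re :=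
  (Complex.le_def.mp (Aux.trace_nonneg hM)).1

lemma Aux.trace_im_zero {M : Matrix n n ℂ} (hM : M.PosSemidef) : M.trace.im = 0 :=
  ((Complex.le_def.mp (Aux.trace_nonneg hM)).2).symm

lemma Aux.sqrt_congr {A B : Matrix n n ℂ} (h : A = B) (hA : A.PosSemidef) (hB : B.PosSemidef) :
    hA.sqrt = hB.sqrt := by subst h; rfl

lemma Aux.traceNorm_nonneg (A : Matrix n n ℂ) : 0 ≤ traceNorm A :=
  (Aux.traceNorm_eq A).symm ▸ Aux.trace_re_nonneg (Matrix.posSemidef_conjTranspose_mul_self A).posSemidef_sqrt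

lemma Aux.psd_smul {M : Matrix n n ℂ} (hM : M.PosSemidef) {t : ℝ} (ht : 0 ≤ t) :
    ((t : ℂ) • M).PosSemidef := by
  refine ⟨?_, fun x => ?_⟩
  · unfold Matrix.IsHermitian
    rw [conjTranspose_smul, hM.1.eq]
    simp [Complex.star_def, Complex.conj_ofReal]
  · exact (hM.smul (Complex.zero_le_real.mpr ht)).2 x

lemma Aux.traceNorm_smul (t : ℝ) (ht : 0 ≤ t) (A : Matrix n n ℂ) :
    traceNorm ((t:ℂ) • A) = t * traceNorm A := by
  have hB := Matrix.posSemidef_conjTranspose_mul_self A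
  have hS := hB.posSemidef_sqrt
  have hsmul : ((t:ℂ) • hB.sqrt).PosSemidef := Aux.psd_smul hS ht
  have hsq : ((t:ℂ) • hB.sqrt) ^ 2 = ((t:ℂ)•A)ᴴ * ((t:ℂ)•A) := by
    rw [conjTranspose_smul, pow_two, smul_mul_smul_comm, smul_mul_smul_comm,
      hB.sqrt_mul_self]
    congr 1
    simp [Complex.star_def, Complex.conj_ofReal]
  have key := hsmul.eq_sqrt_of_sq_eq (Matrix.posSemidef_conjTranspose_mul_self ((t:ℂ)•A)) hsq
  rw [Aux.traceNorm_eq, Aux.traceNorm_eq]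
  rw [← key, trace_smul, smul_eq_mul, Complex.mul_re, Complex.ofReal_re, Complex.ofReal_im]
  ring

lemma Aux.kron_conjTranspose (A : Matrix n n ℂ) (B : Matrix m m ℂ) :
    (A ⊗ₖ B)ᴴ = Aᴴ ⊗ₖ Bᴴ := by
  ext ⟨i,j⟩ ⟨k,l⟩
  simp [conjTranspose_apply, mul_comm]

lemma Aux.traceNorm_kron_proj (A : Matrix n n ℂ) (a : m) :
    traceNorm (A ⊗ₖ single a a (1:ℂ)) = traceNorm A := by
  set F : Matrix m m ℂ := single a a (1:ℂ) with hFdef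
  have hF1 : Fᴴ = F := by
    ext i j
    simp [hFdef, conjTranspose_apply, Matrix.single, and_comm]
  have hF2 : F * F = F := by
    rw [hFdef, Matrix.single_mul_single_same, one_mul]
  have hFtr : F.trace = 1 := by
    simp [hFdef, trace, diag, Matrix.single]
  have hB := Matrix.posSemidef_conjTranspose_mul_self A
  set S := hB.sqrt with hSdef
  have hS := hB.posSemidef_sqrt
  set T := hS.sqrt with hTdef
  have hT := hS.posSemidef_sqrt
  have hpsd : (S ⊗ₖ F).PosSemidef := by
    have : S ⊗ₖ F = (T ⊗ₖ F)ᴴ * (T ⊗ₖ F) := by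
      rw [Aux.kron_conjTranspose, hT.1.eq, hF1, ← Matrix.mul_kronecker_mul,
        hS.sqrt_mul_self, hF2]
    rw [this]
    exact Matrix.posSemidef_conjTranspose_mul_self _
  have hsq : (S ⊗ₖ F) ^ 2 = (A ⊗ₖ F)ᴴ * (A ⊗ₖ F) := by
    rw [pow_two, ← Matrix.mul_kronecker_mul, hB.sqrt_mul_self, hF2,
      Aux.kron_conjTranspose, ← Matrix.mul_kronecker_mul, hF1, hF2]
  have key := hpsd.eq_sqrt_of_sq_eq (Matrix.posSemidef_conjTranspose_mul_self (A ⊗ₖ F)) hsq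
  rw [Aux.traceNorm_eq, Aux.traceNorm_eq]
  rw [← key, Matrix.trace_kronecker, hFtr, mul_one]

end AuxA
section AuxB
variable {ι : Type*} [Fintype ι] [DecidableEq ι] {κ' : Type*} [Fintype κ'] [DecidableEq κ']

lemma Aux.urep_conj (c : ι → ℤ) (θ : ℝ) (X : Matrix ι ι ℂ) (i j : ι) :
    (Urep c θ * X * (Urep c θ)ᴴ) i j
      = Complex.exp (Complex.I * ((c i - c j : ℤ) : ℂ) * θ) * X i j := by
  rw [Urep, Matrix.diagonal_conjTranspose, Matrix.mul_diagonal, Matrix.diagonal_mul]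
  have h1 : (star (fun i => Complex.exp (Complex.I * (c i : ℂ) * (θ:ℝ)))) j
      = Complex.exp (-(Complex.I * (c j : ℂ) * θ)) := by
    simp only [Pi.star_apply, RCLike.star_def, ← Complex.exp_conj]
    congr 1
    simp [Complex.conj_ofReal]
  rw [h1]
  have h2 : Complex.I * ((c i - c j : ℤ):ℂ) * (θ:ℂ)
      = (Complex.I * (c i:ℂ) * θ) + (-(Complex.I * (c j:ℂ) * θ)) := by push_cast; ring
  rw [h2, Complex.exp_add]
  ring

lemma Aux.exp_int_integral (m : ℤ) :
    (∫ θ in (0:ℝ)..(2*Real.pi), Complex.exp (Complex.I * (m:ℂ) * θ))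
      = if m = 0 then ((2*Real.pi : ℝ) : ℂ) else 0 := by
  by_cases hm : m = 0
  · subst hm; simp
  · rw [if_neg hm]
    have hc : Complex.I * (m:ℂ) ≠ 0 :=
      mul_ne_zero Complex.I_ne_zero (Int.cast_ne_zero.mpr hm)
    have key := integral_exp_mul_complex (a := 0) (b := 2*Real.pi) hc
    simp only [mul_assoc] at key ⊢
    rw [key]
    have h1 : Complex.exp (Complex.I * ((m:ℂ) * ((2*Real.pi : ℝ):ℂ))) = 1 := by
      rw [← Complex.exp_int_mul_two_pi_mul_I m]
      congr 1
      push_cast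
      ring
    rw [h1]
    simp

lemma Aux.entry_formula (E : Matrix ι ι ℂ →ₗ[ℂ] Matrix κ' κ' ℂ) (M : Matrix ι ι ℂ) (P Q : κ') :
    E M P Q = ∑ i, ∑ j, M i j * (E (Matrix.single i j 1)) P Q := by
  conv_lhs => rw [Matrix.matrix_eq_sum_single M]
  rw [map_sum, Matrix.sum_apply]
  refine Finset.sum_congr rfl fun i _ => ?_
  rw [map_sum, Matrix.sum_apply]
  refine Finset.sum_congr rfl fun j _ => ?_
  have h : Matrix.single i j (M i j) = M i j • Matrix.single i j 1 := by
    rw [Matrix.smul_single, smul_eq_mul, mul_one]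
  rw [h, E.map_smul, Matrix.smul_apply, smul_eq_mul]

lemma Aux.modeComp_covariant (c : ι → ℤ) (d : κ' → ℤ) (E : Matrix ι ι ℂ →ₗ[ℂ] Matrix κ' κ' ℂ)
    (hcov : IsCovariant c d E) (k : ℤ) (ρ : Matrix ι ι ℂ) :
    E (modeComp c k ρ) = modeComp d k (E ρ) := by
  ext P Q
  set T : ι → ι → ℂ := fun i j => (E (Matrix.single i j 1)) P Q with hT
  have hfun : ∀ θ : ℝ,
      Complex.exp (Complex.I * ((d P - d Q - k : ℤ):ℂ) * θ) * (E ρ) P Q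
        = ∑ i, ∑ j, Complex.exp (Complex.I * ((c i - c j - k : ℤ):ℂ) * θ) * (ρ i j * T i j) := by
    intro θ
    have hg : Complex.exp (-(Complex.I * (k:ℂ) * θ)) * (E (Urep c θ * ρ * (Urep c θ)ᴴ)) P Q
        = Complex.exp (Complex.I * ((d P - d Q - k : ℤ):ℂ) * θ) * (E ρ) P Q := by
      rw [hcov θ ρ, Aux.urep_conj d θ (E ρ) P Q]
      have h2 : Complex.I * ((d P - d Q - k : ℤ):ℂ) * (θ:ℂ)
          = -(Complex.I*(k:ℂ)*θ) + Complex.I * ((d P - d Q : ℤ):ℂ) * θ := by push_cast; ring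
      rw [h2, Complex.exp_add]
      ring
    rw [← hg, Aux.entry_formula E _ P Q, Finset.mul_sum]
    refine Finset.sum_congr rfl fun i _ => ?_
    rw [Finset.mul_sum]
    refine Finset.sum_congr rfl fun j _ => ?_
    rw [Aux.urep_conj c θ ρ i j]
    have hTij : T i j = E (Matrix.single i j 1) P Q := rfl
    have harg : Complex.exp (Complex.I * ((c i - c j - k : ℤ):ℂ) * θ)
        = Complex.exp (-(Complex.I * (k:ℂ) * θ)) * Complex.exp (Complex.I * ((c i - c j : ℤ):ℂ) * θ) := by
      rw [← Complex.exp_add]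
      have h2 : Complex.I * ((c i - c j - k : ℤ):ℂ) * (θ:ℂ)
          = -(Complex.I*(k:ℂ)*θ) + Complex.I * ((c i - c j : ℤ):ℂ) * θ := by push_cast; ring
      rw [h2]
    rw [hTij, harg]
    ring
  have hcont : ∀ (z : ℂ) (w : ℂ), Continuous fun θ : ℝ => Complex.exp (Complex.I * z * θ) * w := by
    intro z w
    exact (Complex.continuous_exp.comp ((continuous_const).mul Complex.continuous_ofReal)).mul
      continuous_const
  have hintL : (∫ θ in (0:ℝ)..(2*Real.pi),
      Complex.exp (Complex.I * ((d P - d Q - k : ℤ):ℂ) * θ) * (E ρ) P Q)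
      = (if d P - d Q - k = 0 then ((2*Real.pi:ℝ):ℂ) else 0) * (E ρ) P Q := by
    rw [intervalIntegral.integral_mul_const, Aux.exp_int_integral]
  have hintR : (∫ θ in (0:ℝ)..(2*Real.pi), ∑ i, ∑ j,
      Complex.exp (Complex.I * ((c i - c j - k : ℤ):ℂ) * θ) * (ρ i j * T i j))
      = ∑ i, ∑ j, (if c i - c j - k = 0 then ((2*Real.pi:ℝ):ℂ) else 0) * (ρ i j * T i j) := by
    rw [intervalIntegral.integral_finset_sum]
    · refine Finset.sum_congr rfl fun i _ => ?_
      rw [intervalIntegral.integral_finset_sum]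
      · exact Finset.sum_congr rfl fun j _ => by
          rw [intervalIntegral.integral_mul_const, Aux.exp_int_integral]
      · exact fun j _ => ((hcont _ _).intervalIntegrable _ _)
    · exact fun i _ => (by
        apply Continuous.intervalIntegrable
        exact continuous_finset_sum _ fun j _ => hcont _ _)
  have heq : (if d P - d Q - k = 0 then ((2*Real.pi:ℝ):ℂ) else 0) * (E ρ) P Q
      = ∑ i, ∑ j, (if c i - c j - k = 0 then ((2*Real.pi:ℝ):ℂ) else 0) * (ρ i j * T i j) := by
    rw [← hintL, ← hintR]
    exact intervalIntegral.integral_congr fun θ _ => hfun θ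
  have h2pi : ((2*Real.pi:ℝ):ℂ) ≠ 0 := by
    simp [Real.pi_ne_zero]
  have hL : E (modeComp c k ρ) P Q
      = ∑ i, ∑ j, (if c i - c j - k = 0 then (1:ℂ) else 0) * (ρ i j * T i j) := by
    rw [Aux.entry_formula E _ P Q]
    refine Finset.sum_congr rfl fun i _ => Finset.sum_congr rfl fun j _ => ?_
    simp only [modeComp, Matrix.of_apply, sub_eq_zero]
    by_cases h : c i - c j = k <;> simp [h, mul_assoc, hT]
  have hR : modeComp d k (E ρ) P Q = (if d P - d Q - k = 0 then (1:ℂ) else 0) * (E ρ) P Q := by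
    simp only [modeComp, Matrix.of_apply, sub_eq_zero]
    by_cases h : d P - d Q = k <;> simp [h]
  rw [hL, hR]
  have key : ((2*Real.pi:ℝ):ℂ) * ((if d P - d Q - k = 0 then (1:ℂ) else 0) * (E ρ) P Q)
      = ((2*Real.pi:ℝ):ℂ) *
        (∑ i, ∑ j, (if c i - c j - k = 0 then (1:ℂ) else 0) * (ρ i j * T i j)) := by
    calc ((2*Real.pi:ℝ):ℂ) * ((if d P - d Q - k = 0 then (1:ℂ) else 0) * (E ρ) P Q)
        = (if d P - d Q - k = 0 then ((2*Real.pi:ℝ):ℂ) else 0) * (E ρ) P Q := by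
          split_ifs <;> ring
      _ = ∑ i, ∑ j, (if c i - c j - k = 0 then ((2*Real.pi:ℝ):ℂ) else 0) * (ρ i j * T i j) := heq
      _ = ∑ i, ∑ j, ((2*Real.pi:ℝ):ℂ) * ((if c i - c j - k = 0 then (1:ℂ) else 0) * (ρ i j * T i j)) := by
          refine Finset.sum_congr rfl fun i _ => Finset.sum_congr rfl fun j _ => ?_
          split_ifs <;> ring
      _ = ((2*Real.pi:ℝ):ℂ) *
            (∑ i, ∑ j, (if c i - c j - k = 0 then (1:ℂ) else 0) * (ρ i j * T i j)) := by
          rw [Finset.mul_sum]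
          exact Finset.sum_congr rfl fun i _ => (Finset.mul_sum _ _ _).symm
  exact (mul_left_cancel₀ h2pi key).symm

end AuxB
section AuxC
variable {ι : Type*} [Fintype ι] [DecidableEq ι] {κ' : Type*} [Fintype κ'] [DecidableEq κ']

lemma Aux.psd_rank_one {n : Type*} [Fintype n] [DecidableEq n] {A : Matrix n n ℂ}
    (hA : A.PosSemidef) : ∃ w : n → n → ℂ, ∀ p q, A p q = ∑ m, w m p * star (w m q) := by
  refine ⟨fun m p => ((Real.sqrt (hA.1.eigenvalues m) : ℝ) : ℂ) *
    (hA.1.eigenvectorUnitary : Matrix n n ℂ) p m, fun p q => ?_⟩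
  conv_lhs => rw [hA.1.spectral_theorem, Unitary.conjStarAlgAut_apply]
  rw [Matrix.mul_apply]
  refine Finset.sum_congr rfl fun m _ => ?_
  rw [Matrix.mul_diagonal, Matrix.star_eq_conjTranspose, Matrix.conjTranspose_apply]
  simp only [Function.comp_apply, star_mul', Complex.star_def, Complex.conj_ofReal]
  have hss : ((Real.sqrt (hA.1.eigenvalues m) : ℝ) : ℂ) * ((Real.sqrt (hA.1.eigenvalues m) : ℝ) : ℂ)
      = (RCLike.ofReal (hA.1.eigenvalues m) : ℂ) := by
    rw [← Complex.ofReal_mul, Real.mul_self_sqrt (hA.eigenvalues_nonneg m)]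
    rfl
  rw [← hss]
  ring

lemma Aux.kraus {E : Matrix ι ι ℂ →ₗ[ℂ] Matrix κ' κ' ℂ} (hChoi : (choi E).PosSemidef) :
    ∃ K : (ι × κ') → Matrix κ' ι ℂ, ∀ X, E X = ∑ m, K m * X * (K m)ᴴ := by
  obtain ⟨w, hw⟩ := Aux.psd_rank_one hChoi
  refine ⟨fun m => Matrix.of fun a i => w m (i, a), fun X => ?_⟩
  ext a b
  rw [Aux.entry_formula E X a b, Matrix.sum_apply]
  have hterm : ∀ m, ((Matrix.of fun a i => w m (i, a)) * X * ((Matrix.of fun a i => w m (i, a)))ᴴ) a b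
      = ∑ i, ∑ j, X i j * (w m (i,a) * star (w m (j,b))) := by
    intro m
    simp only [Matrix.mul_apply, Matrix.conjTranspose_apply, Matrix.of_apply, Finset.sum_mul]
    rw [Finset.sum_comm]
    exact Finset.sum_congr rfl fun i _ => Finset.sum_congr rfl fun j _ => by ring
  have hL : ∀ i j, X i j * (E (Matrix.single i j 1)) a b
      = ∑ m, X i j * (w m (i,a) * star (w m (j,b))) := by
    intro i j
    rw [show (E (Matrix.single i j 1)) a b = choi E (i,a) (j,b) from rfl,
      hw (i,a) (j,b), Finset.mul_sum]
  simp only [hL, hterm]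
  calc ∑ i, ∑ j, ∑ m, X i j * (w m (i,a) * star (w m (j,b)))
      = ∑ i, ∑ m, ∑ j, X i j * (w m (i,a) * star (w m (j,b))) :=
        Finset.sum_congr rfl fun i _ => Finset.sum_comm
    _ = ∑ m, ∑ i, ∑ j, X i j * (w m (i,a) * star (w m (j,b))) := Finset.sum_comm

lemma Aux.trace_mul_std {n : Type*} [Fintype n] [DecidableEq n] (M : Matrix n n ℂ) (i j : n) :
    (M * Matrix.single j i (1:ℂ)).trace = M i j := by
  simp only [Matrix.trace, Matrix.diag, Matrix.mul_apply, Matrix.single, Matrix.of_apply,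
    mul_ite, mul_one, mul_zero]
  simp [ite_and]

lemma Aux.kraus_tp {E : Matrix ι ι ℂ →ₗ[ℂ] Matrix κ' κ' ℂ} {K : (ι × κ') → Matrix κ' ι ℂ}
    (hK : ∀ X, E X = ∑ m, K m * X * (K m)ᴴ)
    (htp : ∀ A : Matrix ι ι ℂ, (E A).trace = A.trace) :
    ∑ m, (K m)ᴴ * K m = 1 := by
  ext i j
  have h := htp (Matrix.single j i (1:ℂ))
  rw [hK, Matrix.trace_sum] at h
  have h2 : ∀ m ∈ (Finset.univ : Finset (ι × κ')), (K m * Matrix.single j i (1:ℂ) * (K m)ᴴ).trace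
      = ((K m)ᴴ * K m * Matrix.single j i (1:ℂ)).trace := by
    intro m _
    exact Matrix.trace_mul_cycle (K m) (Matrix.single j i (1:ℂ)) ((K m)ᴴ)
  rw [Finset.sum_congr rfl h2] at h
  have h3 : ∑ m : ι × κ', ((K m)ᴴ * K m * Matrix.single j i (1:ℂ)).trace
      = ((∑ m : ι × κ', (K m)ᴴ * K m) * Matrix.single j i (1:ℂ)).trace := by
    rw [Finset.sum_mul, Matrix.trace_sum]
  rw [h3, Aux.trace_mul_std] at h
  have h4 : (Matrix.single j i (1:ℂ)).trace = (1 : Matrix ι ι ℂ) i j := by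
    by_cases hij : i = j
    · subst hij
      simp [Matrix.trace, Matrix.diag, Matrix.single, Matrix.one_apply]
    · rw [Matrix.one_apply_ne hij, Matrix.trace]
      apply Finset.sum_eq_zero
      intro a _
      have hcond : ¬(j = a ∧ i = a) := fun hc => hij (hc.2.trans hc.1.symm)
      simp [Matrix.diag, Matrix.single, hcond]
  rw [h, h4]

lemma Aux.trace_cs {n m : Type*} [Fintype n] [Fintype m] (A B : Matrix n m ℂ) :
    ‖(Aᴴ * B).trace‖ ≤ Real.sqrt ((Aᴴ * A).trace.re) * Real.sqrt ((Bᴴ * B).trace.re) := by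
  classical
  let x : EuclideanSpace ℂ (n × m) := WithLp.toLp 2 fun p => A p.1 p.2
  let y : EuclideanSpace ℂ (n × m) := WithLp.toLp 2 fun p => B p.1 p.2
  have h1 : (Aᴴ * B).trace = inner (𝕜 := ℂ) x y := by
    simp only [Matrix.trace, Matrix.diag, Matrix.mul_apply, Matrix.conjTranspose_apply]
    rw [PiLp.inner_apply]
    simp only [RCLike.inner_apply]
    rw [Fintype.sum_prod_type]
    rw [Finset.sum_comm]
    exact Finset.sum_congr rfl fun _ _ => Finset.sum_congr rfl fun _ _ => mul_comm _ _
  have hre : ∀ C : Matrix n m ℂ, (Cᴴ * C).trace.re = ∑ p : n × m, ‖C p.1 p.2‖^2 := by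
    intro C
    rw [Matrix.trace, Complex.re_sum]
    rw [Fintype.sum_prod_type, Finset.sum_comm]
    refine Finset.sum_congr rfl fun j _ => ?_
    rw [Matrix.diag_apply, Matrix.mul_apply, Complex.re_sum]
    refine Finset.sum_congr rfl fun i _ => ?_
    rw [Matrix.conjTranspose_apply, mul_comm, Complex.star_def, Complex.mul_conj,
      Complex.ofReal_re, Complex.normSq_eq_norm_sq]
  calc ‖(Aᴴ * B).trace‖ = ‖inner (𝕜 := ℂ) x y‖ := by rw [h1]
    _ ≤ ‖x‖ * ‖y‖ := norm_inner_le_norm x y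
    _ = Real.sqrt ((Aᴴ * A).trace.re) * Real.sqrt ((Bᴴ * B).trace.re) := by
        rw [EuclideanSpace.norm_eq, EuclideanSpace.norm_eq, hre A, hre B]

lemma Aux.sum_sqrt_cs {M : Type*} [Fintype M] (f g : M → ℝ) (hf : ∀ m, 0 ≤ f m) (hg : ∀ m, 0 ≤ g m) :
    ∑ m, Real.sqrt (f m) * Real.sqrt (g m) ≤ Real.sqrt (∑ m, f m) * Real.sqrt (∑ m, g m) := by
  have h := Finset.sum_mul_sq_le_sq_mul_sq Finset.univ (fun m => Real.sqrt (f m)) (fun m => Real.sqrt (g m))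
  have h1 : ∑ m, Real.sqrt (f m)^2 = ∑ m, f m := Finset.sum_congr rfl fun m _ => Real.sq_sqrt (hf m)
  have h2 : ∑ m, Real.sqrt (g m)^2 = ∑ m, g m := Finset.sum_congr rfl fun m _ => Real.sq_sqrt (hg m)
  rw [h1, h2] at h
  have hs : 0 ≤ ∑ m, Real.sqrt (f m) * Real.sqrt (g m) :=
    Finset.sum_nonneg fun m _ => mul_nonneg (Real.sqrt_nonneg _) (Real.sqrt_nonneg _)
  calc ∑ m, Real.sqrt (f m) * Real.sqrt (g m)
      = Real.sqrt ((∑ m, Real.sqrt (f m) * Real.sqrt (g m))^2) := (Real.sqrt_sq hs).symm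
    _ ≤ Real.sqrt ((∑ m, f m) * (∑ m, g m)) := Real.sqrt_le_sqrt h
    _ = Real.sqrt (∑ m, f m) * Real.sqrt (∑ m, g m) :=
        Real.sqrt_mul (Finset.sum_nonneg fun m _ => hf m) _

end AuxC
section AuxD
variable {n : Type*} [Fintype n] [DecidableEq n]

set_option maxHeartbeats 1000000 in
lemma Aux.polar (Y : Matrix n n ℂ) :
    ∃ W : Matrix n n ℂ,
      ((1 : Matrix n n ℂ) - Wᴴ * W).PosSemidef ∧
      Wᴴ * W * (Matrix.posSemidef_conjTranspose_mul_self Y).sqrt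
        = (Matrix.posSemidef_conjTranspose_mul_self Y).sqrt ∧
      W * (Matrix.posSemidef_conjTranspose_mul_self Y).sqrt = Y := by
  set hB := Matrix.posSemidef_conjTranspose_mul_self Y with hBdef
  set P := hB.sqrt with hPdef
  have hP : P.PosSemidef := hB.posSemidef_sqrt
  have hPP : P * P = Yᴴ * Y := hB.sqrt_mul_self
  set U : Matrix n n ℂ := (hP.1.eigenvectorUnitary : Matrix n n ℂ) with hUdef
  set ν : n → ℝ := hP.1.eigenvalues with hνdef
  have hν : ∀ m, 0 ≤ ν m := hP.eigenvalues_nonneg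
  have hU1 : star U * U = 1 := Unitary.coe_star_mul_self hP.1.eigenvectorUnitary
  have hU2 : U * star U = 1 := Unitary.coe_mul_star_self hP.1.eigenvectorUnitary
  set cd : (n → ℝ) → Matrix n n ℂ :=
    (fun f => U * Matrix.diagonal (fun m => ((f m : ℝ) : ℂ)) * star U) with hcddef
  have hmid : ∀ X : Matrix n n ℂ, star U * (U * X) = X := fun X => by
    rw [← Matrix.mul_assoc, hU1, Matrix.one_mul]
  have hcd_mul : ∀ f g, cd f * cd g = cd (f * g) := by
    intro f g
    rw [hcddef]
    simp only [Matrix.mul_assoc]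
    rw [hmid]
    rw [← Matrix.mul_assoc (Matrix.diagonal _) (Matrix.diagonal _) (star U),
      Matrix.diagonal_mul_diagonal]
    congr 2
    funext m
    simp
  have hcd_conj : ∀ f, (cd f)ᴴ = cd f := by
    intro f
    rw [hcddef]
    simp only
    rw [Matrix.conjTranspose_mul, Matrix.conjTranspose_mul, Matrix.diagonal_conjTranspose]
    have h1 : (star U)ᴴ = U := by
      rw [Matrix.star_eq_conjTranspose, Matrix.conjTranspose_conjTranspose]
    have h2 : Uᴴ = star U := (Matrix.star_eq_conjTranspose U).symm
    have h3 : (star fun m => ((f m : ℝ) : ℂ)) = fun m => ((f m : ℝ) : ℂ) :=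
      funext fun m => by simp [Complex.star_def, Complex.conj_ofReal]
    rw [h1, h2, h3, Matrix.mul_assoc]
  have hcd_one : cd 1 = 1 := by
    rw [hcddef]
    simp only [Pi.one_apply, Complex.ofReal_one]
    rw [show (Matrix.diagonal fun _ : n => (1:ℂ)) = 1 from Matrix.diagonal_one,
      Matrix.mul_one, hU2]
  have hcd_zero : cd 0 = 0 := by
    rw [hcddef]
    simp only [Pi.zero_apply, Complex.ofReal_zero]
    rw [show (Matrix.diagonal fun _ : n => (0:ℂ)) = 0 from Matrix.diagonal_zero,
      Matrix.mul_zero, Matrix.zero_mul]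
  have hcd_sub : ∀ f g, cd f - cd g = cd (f - g) := by
    intro f g
    rw [hcddef]
    simp only
    rw [← Matrix.sub_mul, ← Matrix.mul_sub, Matrix.diagonal_sub]
    congr 2
    funext m
    simp
  have hcd_psd : ∀ f, (∀ m, 0 ≤ f m) → (cd f).PosSemidef := by
    intro f hf
    have hd : (Matrix.diagonal fun m => ((f m : ℝ) : ℂ)).PosSemidef :=
      Matrix.posSemidef_diagonal_iff.mpr fun m => Complex.zero_le_real.mpr (hf m)
    rw [hcddef]
    simp only
    rw [Matrix.star_eq_conjTranspose U]
    exact hd.mul_mul_conjTranspose_same U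
  have h6 : (Matrix.diagonal (RCLike.ofReal ∘ ν) : Matrix n n ℂ)
      = Matrix.diagonal fun m => ((ν m : ℝ) : ℂ) := rfl
  have hPcd : P = cd ν := by
    rw [hcddef]
    simp only
    rw [← h6]
    exact hP.1.spectral_theorem.trans (Unitary.conjStarAlgAut_apply _ _)
  have hYY : Yᴴ * Y = cd (ν * ν) := by rw [← hPP, hPcd, hcd_mul]
  set g : n → ℝ := fun m => if ν m = 0 then 0 else (ν m)⁻¹ with hgdef
  set q : n → ℝ := fun m => if ν m = 0 then 0 else 1 with hqdef
  set e : n → ℝ := fun m => if ν m = 0 then 1 else 0 with hedef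
  have hWH : (Y * cd g)ᴴ = cd g * Yᴴ := by rw [Matrix.conjTranspose_mul, hcd_conj]
  have hWW : (Y * cd g)ᴴ * (Y * cd g) = cd q := by
    rw [hWH]
    calc cd g * Yᴴ * (Y * cd g) = cd g * (Yᴴ * Y) * cd g := by simp only [Matrix.mul_assoc]
      _ = cd (g * (ν * ν) * g) := by rw [hYY, hcd_mul, hcd_mul]
      _ = cd q := by
          rw [show (g * (ν * ν) * g) = q from funext fun m => by
            by_cases hm : ν m = 0
            · simp [hgdef, hqdef, hm]
            · simp only [Pi.mul_apply, hgdef, hqdef, if_neg hm]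
              field_simp]
  have hone_sub : (1 : Matrix n n ℂ) - cd q = cd e := by
    rw [← hcd_one, hcd_sub]
    rw [show ((1 : n → ℝ) - q) = e from funext fun m => by
      by_cases hm : ν m = 0 <;> simp [hqdef, hedef, hm]]
  have hYe : Y * cd e = 0 := by
    have h7 : (Y * cd e)ᴴ * (Y * cd e) = 0 := by
      rw [Matrix.conjTranspose_mul, hcd_conj]
      calc cd e * Yᴴ * (Y * cd e) = cd e * (Yᴴ * Y) * cd e := by simp only [Matrix.mul_assoc]
        _ = cd (e * (ν * ν) * e) := by rw [hYY, hcd_mul, hcd_mul]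
        _ = cd 0 := by
            rw [show (e * (ν * ν) * e) = (0 : n → ℝ) from funext fun m => by
              by_cases hm : ν m = 0 <;> simp [hedef, hm]]
        _ = 0 := hcd_zero
    exact Matrix.conjTranspose_mul_self_eq_zero.mp h7
  refine ⟨Y * cd g, ?_, ?_, ?_⟩
  · rw [hWW, hone_sub]
    exact hcd_psd _ fun m => by by_cases hm : ν m = 0 <;> simp [hedef, hm]
  · rw [hWW, hPcd, hcd_mul]
    rw [show (q * ν) = ν from funext fun m => by
      by_cases hm : ν m = 0 <;> simp [hqdef, hm]]
  · have hgν : (g * ν) = q := by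
      funext m
      by_cases hm : ν m = 0
      · simp [hgdef, hqdef, hm]
      · simp only [Pi.mul_apply, hgdef, hqdef, if_neg hm]
        field_simp
    calc (Y * cd g) * P = Y * cd (g * ν) := by rw [hPcd, Matrix.mul_assoc, hcd_mul]
      _ = Y * cd q := by rw [hgν]
      _ = Y * (1 - cd e) := by rw [← hone_sub]; rw [sub_sub_cancel]
      _ = Y := by rw [Matrix.mul_sub, Matrix.mul_one, hYe, sub_zero]

end AuxD
section AuxE
variable {ι : Type*} [Fintype ι] [DecidableEq ι] {κ' : Type*} [Fintype κ'] [DecidableEq κ']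

set_option maxHeartbeats 1000000 in
lemma Aux.traceNorm_CPTP_le {E : Matrix ι ι ℂ →ₗ[ℂ] Matrix κ' κ' ℂ}
    (hCPTP : IsCPTP E) (X : Matrix ι ι ℂ) : traceNorm (E X) ≤ traceNorm X := by
  obtain ⟨hChoi, htp⟩ := hCPTP
  obtain ⟨K, hK⟩ := Aux.kraus hChoi
  have hK1 : ∑ m : ι × κ', (K m)ᴴ * K m = 1 := Aux.kraus_tp hK htp
  obtain ⟨V, hV1, hV2, hV3⟩ := Aux.polar X
  obtain ⟨W, hW1, hW2, hW3⟩ := Aux.polar (E X)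
  set P := (Matrix.posSemidef_conjTranspose_mul_self X).sqrt with hPdef
  set Q := (Matrix.posSemidef_conjTranspose_mul_self (E X)).sqrt with hQdef
  have hP : P.PosSemidef := (Matrix.posSemidef_conjTranspose_mul_self X).posSemidef_sqrt
  set S := hP.sqrt with hSdef
  have hS : S.PosSemidef := hP.posSemidef_sqrt
  have hSS : S * S = P := hP.sqrt_mul_self
  have hSH : Sᴴ = S := hS.1
  have htrace_decomp : Q.trace = ∑ m : ι × κ', ((W * K m * S)ᴴ * (K m * V * S)).trace := by
    have h1 : Q.trace = (Wᴴ * (E X)).trace := by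
      conv_lhs => rw [← hW2]
      rw [Matrix.mul_assoc, hW3]
    rw [h1, hK X, Finset.mul_sum, Matrix.trace_sum]
    refine Finset.sum_congr rfl fun m _ => ?_
    have hX : X = V * S * S := by rw [Matrix.mul_assoc, hSS, hV3]
    calc (Wᴴ * (K m * X * (K m)ᴴ)).trace
        = ((Wᴴ * K m * V * S) * (S * (K m)ᴴ)).trace := by
          rw [hX]; simp only [Matrix.mul_assoc]
      _ = ((S * (K m)ᴴ) * (Wᴴ * K m * V * S)).trace := Matrix.trace_mul_comm _ _
      _ = ((W * K m * S)ᴴ * (K m * V * S)).trace := by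
          rw [Matrix.conjTranspose_mul, Matrix.conjTranspose_mul, hSH]
          simp only [Matrix.mul_assoc]
  have ha_nonneg : ∀ m : ι × κ', 0 ≤ (((K m * S)ᴴ * (K m * S)).trace).re :=
    fun m => Aux.trace_re_nonneg (Matrix.posSemidef_conjTranspose_mul_self _)
  have hb_nonneg : ∀ m : ι × κ', 0 ≤ (((K m * V * S)ᴴ * (K m * V * S)).trace).re :=
    fun m => Aux.trace_re_nonneg (Matrix.posSemidef_conjTranspose_mul_self _)
  have hterm : ∀ m : ι × κ', ‖((W * K m * S)ᴴ * (K m * V * S)).trace‖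
      ≤ Real.sqrt ((((K m * S)ᴴ * (K m * S)).trace).re)
        * Real.sqrt ((((K m * V * S)ᴴ * (K m * V * S)).trace).re) := by
    intro m
    refine (Aux.trace_cs (W * K m * S) (K m * V * S)).trans ?_
    have hpsd := hW1.conjTranspose_mul_mul_same (K m * S)
    have hsplit : (K m * S)ᴴ * ((1 : Matrix κ' κ' ℂ) - Wᴴ * W) * (K m * S)
        = (K m * S)ᴴ * (K m * S) - (W * (K m * S))ᴴ * (W * (K m * S)) := by
      simp only [Matrix.mul_sub, Matrix.sub_mul, Matrix.mul_one, Matrix.conjTranspose_mul,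
        Matrix.mul_assoc]
    have h8 := Aux.trace_re_nonneg (hsplit ▸ hpsd)
    rw [Matrix.trace_sub, Complex.sub_re] at h8
    have hstep : (((W * K m * S)ᴴ * (W * K m * S)).trace).re
        ≤ (((K m * S)ᴴ * (K m * S)).trace).re := by
      have hassoc : W * K m * S = W * (K m * S) := by rw [Matrix.mul_assoc]
      rw [hassoc]
      linarith
    exact mul_le_mul (Real.sqrt_le_sqrt hstep) le_rfl (Real.sqrt_nonneg _) (Real.sqrt_nonneg _)
  have hsum_a : ∑ m : ι × κ', (((K m * S)ᴴ * (K m * S)).trace).re = P.trace.re := by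
    have h9 : ∀ m : ι × κ', (K m * S)ᴴ * (K m * S) = S * ((K m)ᴴ * K m * S) := by
      intro m; rw [Matrix.conjTranspose_mul, hSH]; simp only [Matrix.mul_assoc]
    have h10 : ∑ m : ι × κ', ((K m * S)ᴴ * (K m * S)) = S * S := by
      rw [Finset.sum_congr rfl fun m _ => h9 m, ← Finset.mul_sum]
      have : ∑ m : ι × κ', (K m)ᴴ * K m * S = (∑ m : ι × κ', (K m)ᴴ * K m) * S :=
        (Finset.sum_mul _ _ _).symm
      rw [this, hK1, Matrix.one_mul]
    calc ∑ m : ι × κ', (((K m * S)ᴴ * (K m * S)).trace).re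
        = ((∑ m : ι × κ', ((K m * S)ᴴ * (K m * S)).trace)).re := (Complex.re_sum _ _).symm
      _ = ((∑ m : ι × κ', ((K m * S)ᴴ * (K m * S))).trace).re := by rw [Matrix.trace_sum]
      _ = P.trace.re := by rw [h10, hSS]
  have hsum_b : ∑ m : ι × κ', (((K m * V * S)ᴴ * (K m * V * S)).trace).re ≤ P.trace.re := by
    have h9 : ∀ m : ι × κ', (K m * V * S)ᴴ * (K m * V * S)
        = (V * S)ᴴ * ((K m)ᴴ * K m * (V * S)) := by
      intro m; simp only [Matrix.conjTranspose_mul, Matrix.mul_assoc]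
    have h10 : ∑ m : ι × κ', ((K m * V * S)ᴴ * (K m * V * S)) = (V * S)ᴴ * (V * S) := by
      rw [Finset.sum_congr rfl fun m _ => h9 m, ← Finset.mul_sum]
      have : ∑ m : ι × κ', (K m)ᴴ * K m * (V * S) = (∑ m : ι × κ', (K m)ᴴ * K m) * (V * S) :=
        (Finset.sum_mul _ _ _).symm
      rw [this, hK1, Matrix.one_mul]
    have h11 : ∑ m : ι × κ', (((K m * V * S)ᴴ * (K m * V * S)).trace).re
        = (((V * S)ᴴ * (V * S)).trace).re := by
      calc ∑ m : ι × κ', (((K m * V * S)ᴴ * (K m * V * S)).trace).re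
          = ((∑ m : ι × κ', ((K m * V * S)ᴴ * (K m * V * S)).trace)).re := (Complex.re_sum _ _).symm
        _ = (((V * S)ᴴ * (V * S)).trace).re := by rw [← Matrix.trace_sum, h10]
    have hpsd := hV1.conjTranspose_mul_mul_same S
    have hsplit : Sᴴ * ((1 : Matrix ι ι ℂ) - Vᴴ * V) * S
        = Sᴴ * S - (V * S)ᴴ * (V * S) := by
      simp only [Matrix.mul_sub, Matrix.sub_mul, Matrix.mul_one, Matrix.conjTranspose_mul,
        Matrix.mul_assoc]
    have h12 := Aux.trace_re_nonneg (hsplit ▸ hpsd)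
    rw [Matrix.trace_sub, Complex.sub_re] at h12
    have h13 : (Sᴴ * S).trace.re = P.trace.re := by rw [hSH, hSS]
    rw [h11]
    linarith
  have hQtr : traceNorm (E X) = Q.trace.re := Aux.traceNorm_eq _
  have hPtr : traceNorm X = P.trace.re := Aux.traceNorm_eq _
  rw [hQtr, hPtr]
  calc Q.trace.re
      = (∑ m : ι × κ', ((W * K m * S)ᴴ * (K m * V * S)).trace).re := by rw [htrace_decomp]
    _ ≤ ‖∑ m : ι × κ', ((W * K m * S)ᴴ * (K m * V * S)).trace‖ := Complex.re_le_norm _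
    _ ≤ ∑ m : ι × κ', ‖((W * K m * S)ᴴ * (K m * V * S)).trace‖ := by
        have := norm_sum_le (Finset.univ : Finset (ι × κ'))
          (fun m => ((W * K m * S)ᴴ * (K m * V * S)).trace)
        simpa using this
    _ ≤ ∑ m : ι × κ', Real.sqrt ((((K m * S)ᴴ * (K m * S)).trace).re)
          * Real.sqrt ((((K m * V * S)ᴴ * (K m * V * S)).trace).re) :=
        Finset.sum_le_sum fun m _ => hterm m
    _ ≤ Real.sqrt (∑ m : ι × κ', (((K m * S)ᴴ * (K m * S)).trace).re)
          * Real.sqrt (∑ m : ι × κ', (((K m * V * S)ᴴ * (K m * V * S)).trace).re) :=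
        Aux.sum_sqrt_cs _ _ ha_nonneg hb_nonneg
    _ ≤ Real.sqrt (P.trace.re) * Real.sqrt (P.trace.re) := by
        rw [hsum_a]
        exact mul_le_mul le_rfl (Real.sqrt_le_sqrt hsum_b) (Real.sqrt_nonneg _) (Real.sqrt_nonneg _)
    _ = P.trace.re := Real.mul_self_sqrt (Aux.trace_re_nonneg hP)

end AuxE

open Kronecker in
/-- if a U(1)-covariant channel maps ρ to
`p σ ⊗ |succ⟩⟨succ| + (1−p)(I/d) ⊗ |fail⟩⟨fail|` with U(1)-invariant flags, then
for every k ≠ 0, `p ‖σ^(k)‖₁ ≤ ‖ρ^(k)‖₁`. -/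
theorem stmt_11 {ι κ : Type*} [Fintype ι] [DecidableEq ι] [Fintype κ] [DecidableEq κ]
    [Nonempty κ]
    (c : ι → ℤ) (d : κ → ℤ)
    (E : Matrix ι ι ℂ →ₗ[ℂ] Matrix (κ × Fin 2) (κ × Fin 2) ℂ)
    (hCPTP : IsCPTP E)
    (hcov : IsCovariant c (fun q : κ × Fin 2 => d q.1) E)
    (ρ : Matrix ι ι ℂ) (hρ : IsDensity ρ)
    (σ : Matrix κ κ ℂ) (hσ : IsDensity σ)
    (p : ℝ) (hp0 : 0 ≤ p) (hp1 : p ≤ 1)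
    (hE : E ρ = (p : ℂ) • (σ ⊗ₖ Matrix.single (0 : Fin 2) (0 : Fin 2) (1:ℂ))
        + ((1 - p : ℝ) : ℂ) •
            ((((Fintype.card κ : ℂ))⁻¹ • (1 : Matrix κ κ ℂ)) ⊗ₖ
              Matrix.single (1 : Fin 2) (1 : Fin 2) (1:ℂ))) :
    ∀ k : ℤ, k ≠ 0 → p * traceNorm (modeComp d k σ) ≤ traceNorm (modeComp c k ρ) := by
  intro k hk
  have h1 : E (modeComp c k ρ) = modeComp (fun q : κ × Fin 2 => d q.1) k (E ρ) :=
    Aux.modeComp_covariant c _ E hcov k ρ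
  have h2 : modeComp (fun q : κ × Fin 2 => d q.1) k (E ρ)
      = (p:ℂ) • ((modeComp d k σ) ⊗ₖ Matrix.single (0 : Fin 2) (0 : Fin 2) (1:ℂ)) := by
    rw [hE]
    ext ⟨i,a⟩ ⟨j,b⟩
    simp only [modeComp, Matrix.of_apply, Matrix.add_apply, Matrix.smul_apply,
      Matrix.kroneckerMap_apply, smul_eq_mul]
    by_cases hdij : d i - d j = k
    · rw [if_pos hdij, if_pos hdij]
      have hij : i ≠ j := by
        intro h
        subst h
        simp only [sub_self] at hdij
        exact hk hdij.symm
      simp [Matrix.one_apply_ne hij]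
    · rw [if_neg hdij, if_neg hdij, zero_mul, mul_zero]
  have h3 : traceNorm (E (modeComp c k ρ)) = p * traceNorm (modeComp d k σ) := by
    rw [h1, h2, Aux.traceNorm_smul p hp0, Aux.traceNorm_kron_proj]
  calc p * traceNorm (modeComp d k σ) = traceNorm (E (modeComp c k ρ)) := h3.symm
    _ ≤ traceNorm (modeComp c k ρ) := Aux.traceNorm_CPTP_le hCPTP _
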